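/- Let κ > 0, α, β, δ₋₁, δ₀, δ₁ ∈ ℝ and μ ∈ ℂ. Set δ(z) := 2/z + δ₋₁ + δ₀·z + δ₁·z² and σ(z) := -√κ·(1 - z²). Then the identity δ(z)·(-i/z + iα) + μ·(σ(z)·δ'(z) - σ'(z)·δ(z)) + (1/2)·σ(z)²·(i/z²) - i·β·σ(z) = 0 holds for all z ∈ ℍ if and only if all of the following hold: μ = i(4-κ)/(4√κ); δ₋₁ = 2α; β√κ - κ + 6i√κ·μ + α·δ₋₁ - δ₀ + i√κ·μ·δ₀ = 0; α·δ₀ - δ₁ + 2i√κ·μ·(δ₁ + δ₋₁) = 0; α·δ₁ + i√κ·μ·δ₀ + κ/2 - β√κ = 0. -/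
import Mathlib


open Complex Polynomial

/-- Classification equation for (δ,σ)-SLE coupled to GFF with Dirichlet
covariance, dipolar-type driving field `σ(z) = -√κ(1-z²)`. -/
theorem coupling_classification_dipolar (κ : ℝ) (hκ : 0 < κ)
    (α β δm1 δ0 δ1 : ℝ) (μ : ℂ)
    (δ σ dδ dσ : ℂ → ℂ)
    (hδ : ∀ z, δ z = 2 / z + (δm1 : ℂ) + (δ0 : ℂ) * z + (δ1 : ℂ) * z ^ 2)
    (hdδ : ∀ z, dδ z = -2 / z ^ 2 + (δ0 : ℂ) + 2 * (δ1 : ℂ) * z)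
    (hσ : ∀ z, σ z = -(Real.sqrt κ : ℂ) * (1 - z ^ 2))
    (hdσ : ∀ z, dσ z = 2 * (Real.sqrt κ : ℂ) * z) :
    (∀ z : ℂ, 0 < z.im →
      δ z * (-Complex.I / z + Complex.I * (α : ℂ))
        + μ * (σ z * dδ z - dσ z * δ z)
        + (1 / 2) * σ z ^ 2 * (Complex.I / z ^ 2)
        - Complex.I * (β : ℂ) * σ z = 0)
    ↔ (μ = Complex.I * (4 - (κ : ℂ)) / (4 * (Real.sqrt κ : ℂ))
       ∧ δm1 = 2 * α
       ∧ (β : ℂ) * (Real.sqrt κ : ℂ) - (κ : ℂ) + 6 * Complex.I * (Real.sqrt κ : ℂ) * μ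
           + (α : ℂ) * (δm1 : ℂ) - (δ0 : ℂ)
           + Complex.I * (Real.sqrt κ : ℂ) * μ * (δ0 : ℂ) = 0
       ∧ (α : ℂ) * (δ0 : ℂ) - (δ1 : ℂ)
           + 2 * Complex.I * (Real.sqrt κ : ℂ) * μ * ((δ1 : ℂ) + (δm1 : ℂ)) = 0
       ∧ (α : ℂ) * (δ1 : ℂ) + Complex.I * (Real.sqrt κ : ℂ) * μ * (δ0 : ℂ)
           + (κ : ℂ) / 2 - (β : ℂ) * (Real.sqrt κ : ℂ) = 0) := by
  set s : ℂ := (Real.sqrt κ : ℂ) with hsdef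
  have hs2 : s ^ 2 = (κ : ℂ) := by
    rw [hsdef]; norm_cast; exact Real.sq_sqrt hκ.le
  have hs0 : s ≠ 0 := by
    rw [hsdef]
    exact_mod_cast (Real.sqrt_pos.mpr hκ).ne'
  have hI : Complex.I ^ 2 = -1 := Complex.I_sq
  constructor
  · intro h
    set c0 : ℂ := -2*I + 2*s*μ + I*s^2/2 with hc0d
    set c1 : ℂ := I*(2*(α:ℂ) - δm1) with hc1d
    set c2 : ℂ := I*((α:ℂ)*δm1 - δ0) - s*μ*((δ0:ℂ)+6) - I*s^2 + I*(β:ℂ)*s with hc2d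
    set c3 : ℂ := I*((α:ℂ)*δ0 - δ1) - 2*s*μ*((δ1:ℂ)+δm1) with hc3d
    set c4 : ℂ := I*(α:ℂ)*δ1 - s*μ*δ0 + I*s^2/2 - I*(β:ℂ)*s with hc4d
    set Q : Polynomial ℂ := C c0 + C c1 * X + C c2 * X^2 + C c3 * X^3 + C c4 * X^4 with hQd
    have hroot : ∀ z : ℂ, 0 < z.im → Q.eval z = 0 := by
      intro z hz
      have hz0 : z ≠ 0 := by
        intro h0; rw [h0] at hz; simp at hz
      have hE := h z hz
      rw [hδ, hdδ, hσ, hdσ] at hE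
      have key : Q.eval z = z^2 * ((2 / z + (δm1 : ℂ) + (δ0 : ℂ) * z + (δ1 : ℂ) * z ^ 2) * (-Complex.I / z + Complex.I * (α : ℂ))
        + μ * ((-s * (1 - z ^ 2)) * (-2 / z ^ 2 + (δ0 : ℂ) + 2 * (δ1 : ℂ) * z) - (2 * s * z) * (2 / z + (δm1 : ℂ) + (δ0 : ℂ) * z + (δ1 : ℂ) * z ^ 2))
        + (1 / 2) * (-s * (1 - z ^ 2)) ^ 2 * (Complex.I / z ^ 2)
        - Complex.I * (β : ℂ) * (-s * (1 - z ^ 2))) := by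
        simp only [hQd, eval_add, eval_mul, eval_pow, eval_C, eval_X, hc0d, hc1d, hc2d, hc3d, hc4d]
        field_simp [hz0]
        ring
      rw [key, hE, mul_zero]
    have hinf : {z : ℂ | Q.IsRoot z}.Infinite := by
      refine Set.infinite_of_injective_forall_mem
        (f := fun n : ℕ => ((n : ℂ) + 1) * I) ?_ ?_
      · intro a b hab
        have h' : ((a:ℂ) + 1) = ((b:ℂ) + 1) := mul_right_cancel₀ I_ne_zero hab
        have : a + 1 = b + 1 := by exact_mod_cast h'
        omega
      · intro n
        apply hroot
        simp
        positivity
    have hQ0 : Q = 0 := Polynomial.eq_zero_of_infinite_isRoot Q hinf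
    have hc0 : c0 = 0 := by
      have := congrArg (fun p => Polynomial.coeff p 0) hQ0
      simpa [hQd] using this
    have hc1 : c1 = 0 := by
      have := congrArg (fun p => Polynomial.coeff p 1) hQ0
      simpa [hQd] using this
    have hc2 : c2 = 0 := by
      have := congrArg (fun p => Polynomial.coeff p 2) hQ0
      simpa [hQd] using this
    have hc3 : c3 = 0 := by
      have := congrArg (fun p => Polynomial.coeff p 3) hQ0
      simpa [hQd] using this
    have hc4 : c4 = 0 := by
      have := congrArg (fun p => Polynomial.coeff p 4) hQ0
      simpa [hQd] using this
    rw [hc0d] at hc0; rw [hc1d] at hc1; rw [hc2d] at hc2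
    rw [hc3d] at hc3; rw [hc4d] at hc4
    refine ⟨?_, ?_, ?_, ?_, ?_⟩
    · rw [eq_div_iff (by simp [hs0] : (4:ℂ) * s ≠ 0)]
      linear_combination 2*hc0 - I*hs2
    · have h2c : 2*(α:ℂ) - δm1 = 0 := by
        rcases mul_eq_zero.mp hc1 with h' | h'
        · exact absurd h' I_ne_zero
        · exact h'
      have : (δm1:ℂ) = 2*α := by linear_combination -h2c
      exact_mod_cast this
    · linear_combination (-I)*hc2 + hs2 + ((β:ℂ)*s - s^2 + (α:ℂ)*δm1 - (δ0:ℂ))*hI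
    · linear_combination (-I)*hc3 + ((α:ℂ)*(δ0:ℂ) - (δ1:ℂ))*hI
    · linear_combination (-I)*hc4 - (1/2)*hs2 + ((α:ℂ)*(δ1:ℂ) - s*(β:ℂ) + s^2/2)*hI
  · rintro ⟨h1, h2, h3, h4, h5⟩ z hz
    have hz0 : z ≠ 0 := by
      intro h0; rw [h0] at hz; simp at hz
    have h1' : μ * (4 * s) = Complex.I * (4 - (κ:ℂ)) := by
      rw [h1]; field_simp
    have h2' : (δm1 : ℂ) = 2 * (α:ℂ) := by exact_mod_cast h2
    rw [hδ, hdδ, hσ, hdσ]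
    have key : (2 / z + (δm1 : ℂ) + (δ0 : ℂ) * z + (δ1 : ℂ) * z ^ 2) * (-Complex.I / z + Complex.I * (α : ℂ))
        + μ * ((-s * (1 - z ^ 2)) * (-2 / z ^ 2 + (δ0 : ℂ) + 2 * (δ1 : ℂ) * z) - (2 * s * z) * (2 / z + (δm1 : ℂ) + (δ0 : ℂ) * z + (δ1 : ℂ) * z ^ 2))
        + (1 / 2) * (-s * (1 - z ^ 2)) ^ 2 * (Complex.I / z ^ 2)
        - Complex.I * (β : ℂ) * (-s * (1 - z ^ 2))
      = ((-2*I + 2*s*μ + I*s^2/2) + I*(2*(α:ℂ) - δm1)*z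
         + (I*((α:ℂ)*δm1 - δ0) - s*μ*((δ0:ℂ)+6) - I*s^2 + I*(β:ℂ)*s)*z^2
         + (I*((α:ℂ)*δ0 - δ1) - 2*s*μ*((δ1:ℂ)+δm1))*z^3
         + (I*(α:ℂ)*δ1 - s*μ*δ0 + I*s^2/2 - I*(β:ℂ)*s)*z^4) / z^2 := by
      field_simp [hz0]
      ring
    rw [key, _root_.div_eq_zero_iff]
    left
    linear_combination (1/2)*h1' + (I/2)*hs2
      + z*(-I)*h2'
      + z^2*(I*h3 - I*hs2) - z^2*(6*s*μ + s*μ*(δ0:ℂ))*hI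
      + z^3*I*h4 - z^3*(2*s*μ*((δ1:ℂ)+(δm1:ℂ)))*hI
      + z^4*(I*h5 + (I/2)*hs2) - z^4*(s*μ*(δ0:ℂ))*hI
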